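/- Let G be a simple d-regular graph (d ≥ 1) on a finite vertex set V of size n ≥ 1, let ε > 0 and C ≥ 16 be real numbers, and suppose that for every subset S ⊆ V the number e(S, V∖S) of edges of G with exactly one endpoint in S satisfies e(S, V∖S) ≥ C·ε·d·|S|·(n−|S|)/n. Then for any two independent sets I₁, I₂ of G, each of size at least (1/2 − ε)·n, either |I₁ ∩ I₂| + |V∖(I₁ ∪ I₂)| ≤ (4/C)·n, or |I₁ ∩ I₂| ≥ (1/2 − 2/C − ε)·n. -/

import Mathlib

open Finset

def crossCount {V : Type*} [Fintype V] [DecidableEq V] (G : SimpleGraph V)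
    [DecidableRel G.Adj] (S : Finset V) : ℕ :=
  (Finset.univ.filter (fun p : V × V => G.Adj p.1 p.2 ∧ p.1 ∈ S ∧ p.2 ∉ S)).card

section aux
variable {V : Type*} [Fintype V] [DecidableEq V] (G : SimpleGraph V) [DecidableRel G.Adj]

lemma count_pairs (T : Finset V) (Q : V → V → Prop) [∀ v w, Decidable (Q v w)] :
    (univ.filter fun p : V × V => p.1 ∈ T ∧ Q p.1 p.2).card
      = ∑ v ∈ T, (univ.filter fun w => Q v w).card := by
  rw [Finset.card_eq_sum_card_fiberwise (f := Prod.fst) (t := T)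
    (fun p hp => (Finset.mem_filter.mp hp).2.1)]
  refine Finset.sum_congr rfl fun v hv => ?_
  refine Finset.card_nbij' (fun p => p.2) (fun w => (v, w)) ?_ ?_ ?_ ?_
  · intro p hp
    simp only [mem_coe, mem_filter, mem_univ, true_and] at hp ⊢
    obtain ⟨⟨_, hq⟩, h1⟩ := hp
    subst h1; exact hq
  · intro w hw
    simp only [mem_coe, mem_filter, mem_univ, true_and] at hw ⊢
    exact ⟨⟨hv, hw⟩, trivial⟩
  · intro p hp
    simp only [mem_coe, mem_filter] at hp
    rw [← hp.2]
  · intro w hw; rfl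

end aux

theorem two_indep_sets_dichotomy
    {V : Type*} [Fintype V] [DecidableEq V]
    (G : SimpleGraph V) [DecidableRel G.Adj]
    (d n : ℕ) (hd : 1 ≤ d) (hreg : G.IsRegularOfDegree d)
    (hn : n = Fintype.card V) (hn1 : 1 ≤ n)
    (ε C : ℝ) (hε : 0 < ε) (hC : 16 ≤ C)
    (hexp : ∀ S : Finset V,
      C * ε * d * (S.card : ℝ) * ((n : ℝ) - S.card) / n ≤ (crossCount G S : ℝ))
    (I₁ I₂ : Finset V)
    (h₁ : ∀ u ∈ I₁, ∀ v ∈ I₁, ¬ G.Adj u v)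
    (h₂ : ∀ u ∈ I₂, ∀ v ∈ I₂, ¬ G.Adj u v)
    (hs₁ : ((1 : ℝ)/2 - ε) * n ≤ (I₁.card : ℝ))
    (hs₂ : ((1 : ℝ)/2 - ε) * n ≤ (I₂.card : ℝ)) :
    ((I₁ ∩ I₂).card : ℝ) + (((I₁ ∪ I₂)ᶜ).card : ℝ) ≤ (4/C) * n ∨
      ((1 : ℝ)/2 - 2/C - ε) * n ≤ ((I₁ ∩ I₂).card : ℝ) := by
  classical
  set A : Finset V := I₁ ∩ I₂ with hAdef
  set B : Finset V := (I₁ ∪ I₂)ᶜ with hBdef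
  set S : Finset V := A ∪ B with hSdef
  -- basic positivity
  have hC0 : (0:ℝ) < C := by linarith
  have hn0 : (0:ℝ) < n := by exact_mod_cast hn1
  have hd0 : (0:ℝ) < d := by exact_mod_cast hd
  -- neighbors of A lie in B
  have hnbr : ∀ a ∈ A, ∀ w, G.Adj a w → w ∈ B := by
    intro a ha w hadj
    have ha' : a ∈ I₁ ∧ a ∈ I₂ := Finset.mem_inter.mp ha
    simp only [hBdef, Finset.mem_compl, Finset.mem_union]
    rintro (h | h)
    · exact h₁ a ha'.1 w h hadj
    · exact h₂ a ha'.2 w h hadj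
  -- counting
  have hEA : (univ.filter fun p : V × V => p.1 ∈ A ∧ (G.Adj p.1 p.2 ∧ p.2 ∈ B)).card
      = A.card * d := by
    rw [count_pairs A (fun v w => G.Adj v w ∧ w ∈ B)]
    have heq : ∀ v ∈ A, (univ.filter fun w => G.Adj v w ∧ w ∈ B).card = d := by
      intro v hv
      have : (univ.filter fun w => G.Adj v w ∧ w ∈ B) = G.neighborFinset v := by
        ext w
        simp only [mem_filter, mem_univ, true_and, SimpleGraph.mem_neighborFinset]
        exact ⟨fun h => h.1, fun h => ⟨h, hnbr v hv w h⟩⟩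
      rw [this]
      exact hreg v
    rw [Finset.sum_congr rfl heq, Finset.sum_const, smul_eq_mul]
  have hEB : (univ.filter fun p : V × V => p.1 ∈ B ∧ G.Adj p.1 p.2).card = B.card * d := by
    rw [count_pairs B (fun v w => G.Adj v w)]
    have heq : ∀ v ∈ B, (univ.filter fun w => G.Adj v w).card = d := by
      intro v _
      have : (univ.filter fun w => G.Adj v w) = G.neighborFinset v := by
        ext w; simp [SimpleGraph.mem_neighborFinset]
      rw [this]; exact hreg v
    rw [Finset.sum_congr rfl heq, Finset.sum_const, smul_eq_mul]
  have hswap : (univ.filter fun p : V × V => p.1 ∈ B ∧ (G.Adj p.1 p.2 ∧ p.2 ∈ A)).card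
      = (univ.filter fun p : V × V => p.1 ∈ A ∧ (G.Adj p.1 p.2 ∧ p.2 ∈ B)).card := by
    refine Finset.card_nbij' Prod.swap Prod.swap ?_ ?_ ?_ ?_
    · intro p hp
      simp only [mem_coe, mem_filter, mem_univ, true_and] at hp ⊢
      exact ⟨hp.2.2, hp.2.1.symm, hp.1⟩
    · intro p hp
      simp only [mem_coe, mem_filter, mem_univ, true_and] at hp ⊢
      exact ⟨hp.2.2, hp.2.1.symm, hp.1⟩
    · intro p _; exact Prod.swap_swap p
    · intro p _; exact Prod.swap_swap p
  -- the key nat inequality: crossCount G S + d|A| ≤ d|B|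
  have hcc : crossCount G S
      ≤ (univ.filter fun p : V × V => p.1 ∈ B ∧ (G.Adj p.1 p.2 ∧ p.2 ∉ S)).card := by
    apply Finset.card_le_card
    intro p hp
    simp only [mem_filter, mem_univ, true_and] at hp ⊢
    obtain ⟨hadj, hp1, hp2⟩ := hp
    refine ⟨?_, hadj, hp2⟩
    rcases Finset.mem_union.mp hp1 with h | h
    · exact absurd (Finset.mem_union_right _ (hnbr p.1 h p.2 hadj)) hp2
    · exact h
  have hXY : (univ.filter fun p : V × V => p.1 ∈ B ∧ (G.Adj p.1 p.2 ∧ p.2 ∉ S)).card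
      + (univ.filter fun p : V × V => p.1 ∈ B ∧ (G.Adj p.1 p.2 ∧ p.2 ∈ A)).card
      ≤ B.card * d := by
    rw [← hEB]
    rw [← Finset.card_union_of_disjoint ?hd]
    case hd =>
      rw [Finset.disjoint_filter]
      intro p _ hp hp'
      exact hp.2.2 (Finset.mem_union_left _ hp'.2.2)
    apply Finset.card_le_card
    intro p hp
    simp only [mem_union, mem_filter, mem_univ, true_and] at hp ⊢
    rcases hp with h | h
    · exact ⟨h.1, h.2.1⟩
    · exact ⟨h.1, h.2.1⟩
  have hnat : crossCount G S + A.card * d ≤ B.card * d := by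
    calc crossCount G S + A.card * d
        ≤ (univ.filter fun p : V × V => p.1 ∈ B ∧ (G.Adj p.1 p.2 ∧ p.2 ∉ S)).card
          + (univ.filter fun p : V × V => p.1 ∈ B ∧ (G.Adj p.1 p.2 ∧ p.2 ∈ A)).card := by
          rw [hswap, hEA]; exact Nat.add_le_add_right hcc _
      _ ≤ B.card * d := hXY
  have hreal : (crossCount G S : ℝ) + A.card * d ≤ B.card * d := by exact_mod_cast hnat
  -- cardinality identities over ℝ
  have hAB : Disjoint A B := by
    have : A ⊆ I₁ ∪ I₂ := (Finset.inter_subset_left).trans Finset.subset_union_left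
    exact disjoint_compl_right.mono_left this
  have hsAB : (S.card : ℝ) = A.card + B.card := by
    rw [hSdef, Finset.card_union_of_disjoint hAB]; push_cast; ring
  have hBcard : (B.card : ℝ) = (n:ℝ) - (I₁ ∪ I₂).card := by
    rw [hBdef, Finset.card_compl, Nat.cast_sub (Finset.card_le_univ _), hn]
  have hUcard : ((I₁ ∪ I₂).card : ℝ) + (A.card : ℝ) = I₁.card + I₂.card := by
    rw [hAdef]; exact_mod_cast congrArg (Nat.cast : ℕ → ℝ)
      (Finset.card_union_add_card_inter I₁ I₂)
  have hBA_le : (B.card : ℝ) - A.card ≤ 2 * ε * n := by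
    have : (B.card : ℝ) - A.card = n - I₁.card - I₂.card := by linarith
    linarith
  -- key real inequality
  have hsc0 : (0:ℝ) ≤ (S.card : ℝ) := Nat.cast_nonneg _
  have hsle : (S.card : ℝ) ≤ n := by
    rw [hn]; exact_mod_cast Finset.card_le_univ S
  have h1 : C * ε * d * (S.card : ℝ) * ((n:ℝ) - S.card) / n ≤ 2 * ε * n * d := by
    have h2 := hexp S
    linarith [h2, hreal, mul_le_mul_of_nonneg_right hBA_le hd0.le]
  have h1' : C * ε * d * (S.card : ℝ) * ((n:ℝ) - S.card) ≤ 2 * ε * n * d * n := by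
    rw [div_le_iff₀ hn0] at h1; linarith
  have hεd : (0:ℝ) < ε * d := mul_pos hε hd0
  have hkey : C * (S.card : ℝ) * ((n:ℝ) - S.card) ≤ 2 * (n:ℝ)^2 := by
    rw [← mul_le_mul_iff_of_pos_right hεd]
    linarith [h1']
  have hCn4 : C * (4/C * (n:ℝ)) = 4 * n := by field_simp
  by_cases hcase : (S.card : ℝ) ≤ (n:ℝ)/2
  · left
    have hp : (0:ℝ) ≤ C * S.card * (((n:ℝ) - S.card) - n/2) :=
      mul_nonneg (mul_nonneg hC0.le hsc0) (by linarith)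
    have hCs : C * (S.card:ℝ) ≤ 4 * n := by
      have h3 : C * (S.card:ℝ) * n ≤ 4 * n * n := by linarith [hp, hkey]
      exact le_of_mul_le_mul_right (by linarith) hn0
    have hs4 : (S.card : ℝ) ≤ 4/C * n :=
      le_of_mul_le_mul_left (by linarith [hCn4, hCs]) hC0
    linarith [hsAB]
  · right
    push_neg at hcase
    have hp : (0:ℝ) ≤ C * ((n:ℝ) - S.card) * ((S.card:ℝ) - n/2) :=
      mul_nonneg (mul_nonneg hC0.le (by linarith)) (by linarith)
    have hCns : C * ((n:ℝ) - S.card) ≤ 4 * n := by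
      have h3 : C * ((n:ℝ) - S.card) * n ≤ 4 * n * n := by linarith [hp, hkey]
      exact le_of_mul_le_mul_right (by linarith) hn0
    have hslow : (n:ℝ) - S.card ≤ 4/C * n :=
      le_of_mul_le_mul_left (by linarith [hCn4, hCns]) hC0
    have h42 : (4:ℝ)/C * n = 2 * (2/C * n) := by ring
    have hA2 : 2 * (A.card : ℝ) = (S.card:ℝ) - ((n:ℝ) - I₁.card - I₂.card) := by
      linarith [hsAB, hBcard, hUcard]
    linarith [hA2, hslow, h42, hs₁, hs₂]
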